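/- Arc fiber of the A₂ singularity: Let k be an algebraically closed field of characteristic zero and let f = x·y − z³ ∈ MvPolynomial (Fin 3) k, where the three variables are denoted x, y, z. Let A be the arc-fiber algebra at the origin, i.e. the quotient of the arc algebra A∞((f)) by the ideal generated by the images of the variables x^{(0)}, y^{(0)}, z^{(0)}. Then PrimeSpectrum A has exactly two irreducible components. -/

import Mathlib

open MvPolynomial

/-- The universal arc `e : k[x_1,…,x_n] → (k[x_j^{(i)}])[[t]]`, sending
`x_j` to `Σ_{i ≥ 0} x_j^{(i)} t^i`. -/
noncomputable def univArc (k : Type*) [CommRing k] (n : ℕ) :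
    MvPolynomial (Fin n) k →ₐ[k] PowerSeries (MvPolynomial (Fin n × ℕ) k) :=
  MvPolynomial.aeval fun j => PowerSeries.mk fun i => MvPolynomial.X (j, i)

/-- The ideal of the arc space of `V(I)`: generated by all `t`-coefficients of `e f`, `f ∈ I`. -/
noncomputable def arcIdeal {k : Type*} [CommRing k] {n : ℕ}
    (I : Ideal (MvPolynomial (Fin n) k)) : Ideal (MvPolynomial (Fin n × ℕ) k) :=
  Ideal.span {g | ∃ f ∈ I, ∃ i : ℕ, g = PowerSeries.coeff i (univArc k n f)}

/-- The arc algebra `A∞(I)`. -/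
noncomputable abbrev ArcAlgebra {k : Type*} [CommRing k] {n : ℕ}
    (I : Ideal (MvPolynomial (Fin n) k)) : Type _ :=
  MvPolynomial (Fin n × ℕ) k ⧸ arcIdeal I

/-- The map `σ : k[x_1,…,x_n] → k[x_j^{(i)}]` recording the initial point of an arc. -/
noncomputable def initialPoint (k : Type*) [CommRing k] (n : ℕ) :
    MvPolynomial (Fin n) k →ₐ[k] MvPolynomial (Fin n × ℕ) k :=
  MvPolynomial.aeval fun j => MvPolynomial.X (j, 0)


noncomputable section A2Aux

open PowerSeries

variable {k : Type*} [Field k]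

/-- `PowerSeries.map` of an `AlgHom`, as an `AlgHom`. -/
def psMap {A B : Type*} [CommRing A] [CommRing B] [Algebra k A] [Algebra k B]
    (ψ : A →ₐ[k] B) : PowerSeries A →ₐ[k] PowerSeries B :=
  { PowerSeries.map ψ.toRingHom with
    commutes' := fun r => by
      simp [PowerSeries.algebraMap_apply, PowerSeries.map_C] }

@[simp] lemma coeff_psMap {A B : Type*} [CommRing A] [CommRing B] [Algebra k A] [Algebra k B]
    (ψ : A →ₐ[k] B) (F : PowerSeries A) (n : ℕ) :
    PowerSeries.coeff n (psMap ψ F) = ψ (PowerSeries.coeff n F) := by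
  show PowerSeries.coeff n (PowerSeries.map ψ.toRingHom F) = _
  rw [PowerSeries.coeff_map]; rfl

variable (k) in
abbrev R3 := MvPolynomial (Fin 3 × ℕ) k

variable (k) in
/-- The hom `k[x_j^{(i)}] → T` substituting coefficients of given power series. -/
def seriesHom {T : Type*} [CommRing T] [Algebra k T] (s : Fin 3 → PowerSeries T) :
    R3 k →ₐ[k] T :=
  MvPolynomial.aeval fun p => PowerSeries.coeff p.2 (s p.1)

@[simp] lemma seriesHom_X {T : Type*} [CommRing T] [Algebra k T]
    (s : Fin 3 → PowerSeries T) (j : Fin 3) (i : ℕ) :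
    seriesHom k s (X (j, i)) = PowerSeries.coeff i (s j) :=
  aeval_X _ _

lemma comp_seriesHom {T T' : Type*} [CommRing T] [Algebra k T] [CommRing T'] [Algebra k T']
    (ψ : T →ₐ[k] T') (s : Fin 3 → PowerSeries T) :
    ψ.comp (seriesHom k s) = seriesHom k (fun j => psMap ψ (s j)) := by
  apply MvPolynomial.algHom_ext
  rintro ⟨j, i⟩
  simp [seriesHom]

lemma eq_seriesHom {T : Type*} [CommRing T] [Algebra k T] (h : R3 k →ₐ[k] T) :
    h = seriesHom k (fun j => PowerSeries.mk fun i => h (X (j, i))) := by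
  apply MvPolynomial.algHom_ext
  rintro ⟨j, i⟩
  simp [PowerSeries.coeff_mk]

lemma psMap_univArc {T : Type*} [CommRing T] [Algebra k T]
    (s : Fin 3 → PowerSeries T) (f : MvPolynomial (Fin 3) k) :
    psMap (seriesHom k s) (univArc k 3 f) = MvPolynomial.aeval s f := by
  rw [univArc, ← AlgHom.comp_apply, MvPolynomial.comp_aeval]
  have h : (fun j : Fin 3 => psMap (seriesHom k s) (PowerSeries.mk fun i => X (j, i))) = s := by
    funext j
    apply PowerSeries.ext
    intro n
    simp [PowerSeries.coeff_mk]
  rw [h]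

lemma seriesHom_coeff_univArc {T : Type*} [CommRing T] [Algebra k T]
    (s : Fin 3 → PowerSeries T) (f : MvPolynomial (Fin 3) k) (i : ℕ) :
    seriesHom k s (PowerSeries.coeff i (univArc k 3 f)) =
      PowerSeries.coeff i (MvPolynomial.aeval s f) := by
  rw [← psMap_univArc, coeff_psMap]


variable (k) in
abbrev S2 := MvPolynomial (Bool × ℕ) k

variable (k) in
def Useries : PowerSeries (S2 k) := PowerSeries.mk fun i => if i = 0 then 0 else X (true, i)

variable (k) in
def Vseries : PowerSeries (S2 k) := PowerSeries.mk fun j => X (false, j)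

variable (k) in
def Ufree : PowerSeries (S2 k) := PowerSeries.mk fun i => X (true, i)

variable (k) in
def Vzero : PowerSeries (S2 k) := PowerSeries.mk fun j => if j = 0 then 0 else X (false, j)

variable (k) in
def chartA : Fin 3 → PowerSeries (S2 k) :=
  ![Useries k, Useries k ^ 2 * Vseries k ^ 3, Useries k * Vseries k]

variable (k) in
def chartC : Fin 3 → PowerSeries (S2 k) :=
  ![Useries k ^ 2 * Vseries k ^ 3, Useries k, Useries k * Vseries k]

variable (k) in
def chartB : Fin 3 → PowerSeries (S2 k) :=
  ![Ufree k ^ 2 * Vzero k, Ufree k * Vzero k ^ 2, Ufree k * Vzero k]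

@[simp] lemma constantCoeff_Useries : PowerSeries.constantCoeff (Useries k) = 0 := by
  simp [Useries, ← PowerSeries.coeff_zero_eq_constantCoeff, PowerSeries.coeff_mk]

@[simp] lemma constantCoeff_Vzero : PowerSeries.constantCoeff (Vzero k) = 0 := by
  simp [Vzero, ← PowerSeries.coeff_zero_eq_constantCoeff, PowerSeries.coeff_mk]

lemma coeff_one_mul_eq_zero {T : Type*} [CommRing T] (a b : PowerSeries T)
    (ha : PowerSeries.constantCoeff a = 0) (hb : PowerSeries.constantCoeff b = 0) :
    PowerSeries.coeff 1 (a * b) = 0 := by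
  rw [PowerSeries.coeff_mul]
  rw [show (Finset.HasAntidiagonal.antidiagonal (1:ℕ)) = {(0,1),(1,0)} from rfl]
  simp [PowerSeries.coeff_zero_eq_constantCoeff, ha, hb]

lemma constantCoeff_mul_eq_zero {T : Type*} [CommRing T] (a b : PowerSeries T)
    (ha : PowerSeries.constantCoeff a = 0) :
    PowerSeries.constantCoeff (a * b) = 0 := by
  rw [map_mul, ha, zero_mul]

/-- The triple defining an "arc datum": `s 0 * s 1 = s 2 ^ 3` and all constant coeffs vanish. -/
def IsArcTriple {T : Type*} [CommRing T] (s : Fin 3 → PowerSeries T) : Prop :=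
  s 0 * s 1 = s 2 ^ 3 ∧ ∀ j, PowerSeries.constantCoeff (s j) = 0

lemma isArcTriple_chartA : IsArcTriple (chartA k) := by
  constructor
  · show Useries k * (Useries k ^ 2 * Vseries k ^ 3) = (Useries k * Vseries k) ^ 3
    ring
  · intro j
    fin_cases j <;>
      simp [chartA, constantCoeff_mul_eq_zero, map_mul, map_pow]

lemma isArcTriple_chartC : IsArcTriple (chartC k) := by
  constructor
  · show Useries k ^ 2 * Vseries k ^ 3 * Useries k = (Useries k * Vseries k) ^ 3
    ring
  · intro j
    fin_cases j <;>
      simp [chartC, constantCoeff_mul_eq_zero, map_mul, map_pow]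

lemma isArcTriple_chartB : IsArcTriple (chartB k) := by
  constructor
  · show Ufree k ^ 2 * Vzero k * (Ufree k * Vzero k ^ 2) = (Ufree k * Vzero k) ^ 3
    ring
  · intro j
    fin_cases j <;>
      simp [chartB, map_mul, map_pow]

variable (k) in
/-- `f₀ = x y - z ^ 3`. -/
def f0 : MvPolynomial (Fin 3) k :=
  MvPolynomial.X 0 * MvPolynomial.X 1 - MvPolynomial.X 2 ^ 3

variable (k) in
/-- The full fiber ideal. -/
def Jid : Ideal (R3 k) :=
  arcIdeal (Ideal.span {f0 k}) ⊔ Ideal.span {g : R3 k | ∃ j : Fin 3, g = X (j, 0)}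

lemma aeval_f0 {T : Type*} [CommRing T] [Algebra k T] (s : Fin 3 → PowerSeries T) :
    MvPolynomial.aeval s (f0 k) = s 0 * s 1 - s 2 ^ 3 := by
  simp [f0]

lemma Jid_le_ker {T : Type*} [CommRing T] [Algebra k T] [IsDomain T]
    {s : Fin 3 → PowerSeries T} (hs : IsArcTriple s) :
    Jid k ≤ RingHom.ker (seriesHom k s) := by
  rw [Jid, sup_le_iff]
  constructor
  · rw [arcIdeal, Ideal.span_le]
    rintro g ⟨f, hf, i, rfl⟩
    rw [Ideal.mem_span_singleton] at hf
    obtain ⟨c, rfl⟩ := hf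
    rw [SetLike.mem_coe, RingHom.mem_ker, seriesHom_coeff_univArc, map_mul, aeval_f0,
      hs.1, sub_self, zero_mul, map_zero]
  · rw [Ideal.span_le]
    rintro g ⟨j, rfl⟩
    rw [SetLike.mem_coe, RingHom.mem_ker, seriesHom_X,
      PowerSeries.coeff_zero_eq_constantCoeff, hs.2 j]

variable (k) in
def PA : Ideal (R3 k) := RingHom.ker (seriesHom k (chartA k))

variable (k) in
def PC : Ideal (R3 k) := RingHom.ker (seriesHom k (chartC k))

variable (k) in
def PB : Ideal (R3 k) := RingHom.ker (seriesHom k (chartB k))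

instance : (PA k).IsPrime := RingHom.ker_isPrime _
instance : (PC k).IsPrime := RingHom.ker_isPrime _
instance : (PB k).IsPrime := RingHom.ker_isPrime _

lemma X11_mem_PA : (X ((1 : Fin 3), (1 : ℕ)) : R3 k) ∈ PA k := by
  rw [PA, RingHom.mem_ker, seriesHom_X]
  show PowerSeries.coeff 1 (Useries k ^ 2 * Vseries k ^ 3) = 0
  rw [pow_two, mul_assoc]
  exact coeff_one_mul_eq_zero _ _ (constantCoeff_Useries)
    (constantCoeff_mul_eq_zero _ _ (constantCoeff_Useries))

lemma X01_mem_PC : (X ((0 : Fin 3), (1 : ℕ)) : R3 k) ∈ PC k := by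
  rw [PC, RingHom.mem_ker, seriesHom_X]
  show PowerSeries.coeff 1 (Useries k ^ 2 * Vseries k ^ 3) = 0
  rw [pow_two, mul_assoc]
  exact coeff_one_mul_eq_zero _ _ (constantCoeff_Useries)
    (constantCoeff_mul_eq_zero _ _ (constantCoeff_Useries))

lemma X01_not_mem_PA : (X ((0 : Fin 3), (1 : ℕ)) : R3 k) ∉ PA k := by
  rw [PA, RingHom.mem_ker, seriesHom_X]
  show PowerSeries.coeff 1 (Useries k) ≠ 0
  simp [Useries, PowerSeries.coeff_mk]

lemma X11_not_mem_PC : (X ((1 : Fin 3), (1 : ℕ)) : R3 k) ∉ PC k := by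
  rw [PC, RingHom.mem_ker, seriesHom_X]
  show PowerSeries.coeff 1 (Useries k) ≠ 0
  simp [Useries, PowerSeries.coeff_mk]


section Factor

variable {L : Type*} [CommRing L] [Algebra k L]

lemma psMap_aeval_Useries (g : Bool × ℕ → L) (h0 : g (true, 0) = 0) :
    psMap (MvPolynomial.aeval g : S2 k →ₐ[k] L) (Useries k) =
      PowerSeries.mk fun i => g (true, i) := by
  apply PowerSeries.ext
  intro n
  rw [coeff_psMap]
  cases n with
  | zero => simp [Useries, PowerSeries.coeff_mk, h0]
  | succ n => simp [Useries, PowerSeries.coeff_mk]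

lemma psMap_aeval_Vseries (g : Bool × ℕ → L) :
    psMap (MvPolynomial.aeval g : S2 k →ₐ[k] L) (Vseries k) =
      PowerSeries.mk fun j => g (false, j) := by
  apply PowerSeries.ext
  intro n
  rw [coeff_psMap]
  simp [Vseries, PowerSeries.coeff_mk]

lemma psMap_aeval_Ufree (g : Bool × ℕ → L) :
    psMap (MvPolynomial.aeval g : S2 k →ₐ[k] L) (Ufree k) =
      PowerSeries.mk fun i => g (true, i) := by
  apply PowerSeries.ext
  intro n
  rw [coeff_psMap]
  simp [Ufree, PowerSeries.coeff_mk]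

lemma psMap_aeval_Vzero (g : Bool × ℕ → L) (h0 : g (false, 0) = 0) :
    psMap (MvPolynomial.aeval g : S2 k →ₐ[k] L) (Vzero k) =
      PowerSeries.mk fun j => g (false, j) := by
  apply PowerSeries.ext
  intro n
  rw [coeff_psMap]
  cases n with
  | zero => simp [Vzero, PowerSeries.coeff_mk, h0]
  | succ n => simp [Vzero, PowerSeries.coeff_mk]

lemma mk_coeff (F : PowerSeries L) : (PowerSeries.mk fun i => PowerSeries.coeff i F) = F := by
  apply PowerSeries.ext; intro n; simp [PowerSeries.coeff_mk]

lemma chartA_factor (s : Fin 3 → PowerSeries L) (v : PowerSeries L)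
    (h0 : PowerSeries.constantCoeff (s 0) = 0)
    (hy : s 0 ^ 2 * v ^ 3 = s 1) (hz : s 0 * v = s 2) :
    ∃ ψ : S2 k →ₐ[k] L, ψ.comp (seriesHom k (chartA k)) = seriesHom k s := by
  refine ⟨MvPolynomial.aeval (fun p : Bool × ℕ =>
    if p.1 then PowerSeries.coeff p.2 (s 0) else PowerSeries.coeff p.2 v), ?_⟩
  rw [comp_seriesHom]
  congr 1
  funext j
  have hU := psMap_aeval_Useries (k := k)
    (fun p : Bool × ℕ => if p.1 then PowerSeries.coeff p.2 (s 0) else PowerSeries.coeff p.2 v)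
    (by simpa [← PowerSeries.coeff_zero_eq_constantCoeff] using h0)
  have hV := psMap_aeval_Vseries (k := k)
    (fun p : Bool × ℕ => if p.1 then PowerSeries.coeff p.2 (s 0) else PowerSeries.coeff p.2 v)
  rw [show (fun i : ℕ => if ((true, i) : Bool × ℕ).1 = true
      then PowerSeries.coeff i (s 0) else PowerSeries.coeff i v)
      = fun i : ℕ => PowerSeries.coeff i (s 0) from by funext i; simp] at hU
  rw [show (fun i : ℕ => if ((false, i) : Bool × ℕ).1 = true
      then PowerSeries.coeff i (s 0) else PowerSeries.coeff i v)
      = fun i : ℕ => PowerSeries.coeff i v from by funext i; simp] at hV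
  rw [mk_coeff] at hU
  rw [mk_coeff] at hV
  fin_cases j
  · show psMap _ (Useries k) = s 0
    rw [hU]
  · show psMap _ (Useries k ^ 2 * Vseries k ^ 3) = s 1
    rw [map_mul, map_pow, map_pow, hU, hV, hy]
  · show psMap _ (Useries k * Vseries k) = s 2
    rw [map_mul, hU, hV, hz]

lemma chartC_factor (s : Fin 3 → PowerSeries L) (v : PowerSeries L)
    (h0 : PowerSeries.constantCoeff (s 1) = 0)
    (hx : s 1 ^ 2 * v ^ 3 = s 0) (hz : s 1 * v = s 2) :
    ∃ ψ : S2 k →ₐ[k] L, ψ.comp (seriesHom k (chartC k)) = seriesHom k s := by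
  refine ⟨MvPolynomial.aeval (fun p : Bool × ℕ =>
    if p.1 then PowerSeries.coeff p.2 (s 1) else PowerSeries.coeff p.2 v), ?_⟩
  rw [comp_seriesHom]
  congr 1
  funext j
  have hU := psMap_aeval_Useries (k := k)
    (fun p : Bool × ℕ => if p.1 then PowerSeries.coeff p.2 (s 1) else PowerSeries.coeff p.2 v)
    (by simpa [← PowerSeries.coeff_zero_eq_constantCoeff] using h0)
  have hV := psMap_aeval_Vseries (k := k)
    (fun p : Bool × ℕ => if p.1 then PowerSeries.coeff p.2 (s 1) else PowerSeries.coeff p.2 v)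
  rw [show (fun i : ℕ => if ((true, i) : Bool × ℕ).1 = true
      then PowerSeries.coeff i (s 1) else PowerSeries.coeff i v)
      = fun i : ℕ => PowerSeries.coeff i (s 1) from by funext i; simp] at hU
  rw [show (fun i : ℕ => if ((false, i) : Bool × ℕ).1 = true
      then PowerSeries.coeff i (s 1) else PowerSeries.coeff i v)
      = fun i : ℕ => PowerSeries.coeff i v from by funext i; simp] at hV
  rw [mk_coeff] at hU
  rw [mk_coeff] at hV
  fin_cases j
  · show psMap _ (Useries k ^ 2 * Vseries k ^ 3) = s 0
    rw [map_mul, map_pow, map_pow, hU, hV, hx]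
  · show psMap _ (Useries k) = s 1
    rw [hU]
  · show psMap _ (Useries k * Vseries k) = s 2
    rw [map_mul, hU, hV, hz]

lemma chartB_factor (s : Fin 3 → PowerSeries L) (u w : PowerSeries L)
    (hw0 : PowerSeries.constantCoeff w = 0)
    (hx : u ^ 2 * w = s 0) (hy : u * w ^ 2 = s 1) (hz : u * w = s 2) :
    ∃ ψ : S2 k →ₐ[k] L, ψ.comp (seriesHom k (chartB k)) = seriesHom k s := by
  refine ⟨MvPolynomial.aeval (fun p : Bool × ℕ =>
    if p.1 then PowerSeries.coeff p.2 u else PowerSeries.coeff p.2 w), ?_⟩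
  rw [comp_seriesHom]
  congr 1
  funext j
  have hU := psMap_aeval_Ufree (k := k)
    (fun p : Bool × ℕ => if p.1 then PowerSeries.coeff p.2 u else PowerSeries.coeff p.2 w)
  have hV := psMap_aeval_Vzero (k := k)
    (fun p : Bool × ℕ => if p.1 then PowerSeries.coeff p.2 u else PowerSeries.coeff p.2 w)
    (by simpa [← PowerSeries.coeff_zero_eq_constantCoeff] using hw0)
  rw [show (fun i : ℕ => if ((true, i) : Bool × ℕ).1 = true
      then PowerSeries.coeff i u else PowerSeries.coeff i w)
      = fun i : ℕ => PowerSeries.coeff i u from by funext i; simp] at hU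
  rw [show (fun i : ℕ => if ((false, i) : Bool × ℕ).1 = true
      then PowerSeries.coeff i u else PowerSeries.coeff i w)
      = fun i : ℕ => PowerSeries.coeff i w from by funext i; simp] at hV
  rw [mk_coeff] at hU
  rw [mk_coeff] at hV
  fin_cases j
  · show psMap _ (Ufree k ^ 2 * Vzero k) = s 0
    rw [map_mul, map_pow, hU, hV, hx]
  · show psMap _ (Ufree k * Vzero k ^ 2) = s 1
    rw [map_mul, map_pow, hU, hV, hy]
  · show psMap _ (Ufree k * Vzero k) = s 2
    rw [map_mul, hU, hV, hz]

end Factor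

lemma PA_le_PB : PA k ≤ PB k := by
  classical
  have hXne : (MvPolynomial.X (true, 0) : S2 k) ≠ 0 := MvPolynomial.X_ne_zero _
  set T := Localization.Away (MvPolynomial.X (true, 0) : S2 k) with hT
  let ι : S2 k →ₐ[k] T := IsScalarTower.toAlgHom k (S2 k) T
  have hinj : Function.Injective ι :=
    IsLocalization.injective T (powers_le_nonZeroDivisors_of_noZeroDivisors hXne)
  have hcc : PowerSeries.constantCoeff (psMap ι (Ufree k)) =
      ι (MvPolynomial.X (true, 0)) := by
    rw [← PowerSeries.coeff_zero_eq_constantCoeff, coeff_psMap]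
    simp [Ufree, PowerSeries.coeff_mk]
  have hunit : IsUnit (psMap ι (Ufree k)) := by
    rw [PowerSeries.isUnit_iff_constantCoeff, hcc]
    exact IsLocalization.Away.algebraMap_isUnit _
  obtain ⟨w, hw⟩ := hunit.exists_right_inv
  set uu := psMap ι (Ufree k) with huu
  set vv := psMap ι (Vzero k) with hvv
  have hvv0 : PowerSeries.constantCoeff vv = 0 := by
    rw [hvv, ← PowerSeries.coeff_zero_eq_constantCoeff, coeff_psMap]
    simp [Vzero, PowerSeries.coeff_mk]
  let g : Bool × ℕ → T := fun p =>
    if p.1 then PowerSeries.coeff p.2 (uu ^ 2 * vv) else PowerSeries.coeff p.2 w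
  let ψ : S2 k →ₐ[k] T := MvPolynomial.aeval g
  have hccU : PowerSeries.constantCoeff (uu ^ 2 * vv) = 0 := by
    rw [mul_comm]
    exact constantCoeff_mul_eq_zero _ _ hvv0
  have hg0 : g (true, 0) = 0 := by
    simp only [g, if_true]
    rw [PowerSeries.coeff_zero_eq_constantCoeff, hccU]
  have hU : psMap ψ (Useries k) = uu ^ 2 * vv := by
    rw [psMap_aeval_Useries (k := k) g hg0]
    apply PowerSeries.ext
    intro n
    simp [g, PowerSeries.coeff_mk]
  have hV : psMap ψ (Vseries k) = w := by
    rw [psMap_aeval_Vseries (k := k) g]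
    apply PowerSeries.ext
    intro n
    simp [g, PowerSeries.coeff_mk]
  have key : ψ.comp (seriesHom k (chartA k)) = ι.comp (seriesHom k (chartB k)) := by
    rw [comp_seriesHom, comp_seriesHom]
    congr 1
    funext j
    fin_cases j
    · show psMap ψ (Useries k) = psMap ι (Ufree k ^ 2 * Vzero k)
      rw [hU, map_mul, map_pow, ← huu, ← hvv]
    · show psMap ψ (Useries k ^ 2 * Vseries k ^ 3) = psMap ι (Ufree k * Vzero k ^ 2)
      rw [map_mul, map_pow, map_pow, hU, hV, map_mul, map_pow, ← huu, ← hvv]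
      calc (uu ^ 2 * vv) ^ 2 * w ^ 3 = (uu * w) ^ 3 * (uu * vv ^ 2) := by ring
        _ = uu * vv ^ 2 := by rw [hw, one_pow, one_mul]
    · show psMap ψ (Useries k * Vseries k) = psMap ι (Ufree k * Vzero k)
      rw [map_mul, hU, hV, map_mul, ← huu, ← hvv]
      calc uu ^ 2 * vv * w = (uu * w) * (uu * vv) := by ring
        _ = uu * vv := by rw [hw, one_mul]
  intro p hp
  rw [PA, RingHom.mem_ker] at hp
  have h2 : ι (seriesHom k (chartB k) p) = 0 := by
    rw [← AlgHom.comp_apply, ← key, AlgHom.comp_apply, hp, map_zero]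
  rw [PB, RingHom.mem_ker]
  exact hinj (by rw [h2, map_zero])


set_option maxHeartbeats 2000000 in
set_option synthInstance.maxHeartbeats 400000 in
lemma main_cases {Q : Ideal (R3 k)} (hQ : Q.IsPrime) (hJ : Jid k ≤ Q) :
    PA k ≤ Q ∨ PC k ≤ Q := by
  haveI := hQ
  set A := R3 k ⧸ Q with hA
  set L := FractionRing A with hL
  set γ : R3 k →ₐ[k] L :=
    (IsScalarTower.toAlgHom k A L).comp (Ideal.Quotient.mkₐ k Q) with hγdef
  have hker : ∀ p : R3 k, γ p = 0 ↔ p ∈ Q := by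
    intro p
    show algebraMap A L (Ideal.Quotient.mk Q p) = 0 ↔ _
    rw [map_eq_zero_iff _ (IsFractionRing.injective A L), Ideal.Quotient.eq_zero_iff_mem]
  set sγ : Fin 3 → PowerSeries L := fun j => PowerSeries.mk fun i => γ (X (j, i)) with hsγ
  have hγ : γ = seriesHom k sγ := eq_seriesHom γ
  have hconst : ∀ j, PowerSeries.constantCoeff (sγ j) = 0 := by
    intro j
    have hm : (X (j, 0) : R3 k) ∈ Q := hJ (Ideal.mem_sup_right (Ideal.subset_span ⟨j, rfl⟩))
    rw [hsγ, ← PowerSeries.coeff_zero_eq_constantCoeff]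
    simpa [PowerSeries.coeff_mk] using (hker _).mpr hm
  have hrel : sγ 0 * sγ 1 = sγ 2 ^ 3 := by
    have h0 : MvPolynomial.aeval sγ (f0 k) = 0 := by
      apply PowerSeries.ext
      intro i
      rw [← seriesHom_coeff_univArc, ← hγ, map_zero]
      have hmem : (PowerSeries.coeff i (univArc k 3 (f0 k)) : R3 k) ∈ Jid k :=
        Ideal.mem_sup_left (Ideal.subset_span
          ⟨f0 k, Ideal.subset_span rfl, i, rfl⟩)
      exact (hker _).mpr (hJ hmem)
    rw [aeval_f0] at h0
    exact sub_eq_zero.mp h0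
  have conclA : (∃ ψ : S2 k →ₐ[k] L, ψ.comp (seriesHom k (chartA k)) = seriesHom k sγ) →
      PA k ≤ Q := by
    rintro ⟨ψ, hψ⟩ p hp
    rw [PA, RingHom.mem_ker] at hp
    refine (hker p).mp ?_
    rw [hγ, ← hψ, AlgHom.comp_apply, hp, map_zero]
  have conclC : (∃ ψ : S2 k →ₐ[k] L, ψ.comp (seriesHom k (chartC k)) = seriesHom k sγ) →
      PC k ≤ Q := by
    rintro ⟨ψ, hψ⟩ p hp
    rw [PC, RingHom.mem_ker] at hp
    refine (hker p).mp ?_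
    rw [hγ, ← hψ, AlgHom.comp_apply, hp, map_zero]
  have conclB : (∃ ψ : S2 k →ₐ[k] L, ψ.comp (seriesHom k (chartB k)) = seriesHom k sγ) →
      PA k ≤ Q := by
    rintro ⟨ψ, hψ⟩
    refine (PA_le_PB (k := k)).trans ?_
    rintro p hp
    rw [PB, RingHom.mem_ker] at hp
    refine (hker p).mp ?_
    rw [hγ, ← hψ, AlgHom.comp_apply, hp, map_zero]
  by_cases hx0 : sγ 0 = 0
  · -- x = 0 : use chart C with v = 0
    have hz0 : sγ 2 = 0 := by
      have : sγ 2 ^ 3 = 0 := by rw [← hrel, hx0, zero_mul]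
      exact pow_eq_zero_iff (by norm_num) |>.mp this
    refine Or.inr (conclC (chartC_factor sγ 0 (hconst 1) ?_ ?_))
    · rw [hx0]; ring
    · rw [hz0]; ring
  by_cases hy0 : sγ 1 = 0
  · -- y = 0 : use chart A with v = 0
    have hz0 : sγ 2 = 0 := by
      have : sγ 2 ^ 3 = 0 := by rw [← hrel, hy0, mul_zero]
      exact pow_eq_zero_iff (by norm_num) |>.mp this
    refine Or.inl (conclA (chartA_factor sγ 0 (hconst 0) ?_ ?_))
    · rw [hy0]; ring
    · rw [hz0]; ring
  have hz0 : sγ 2 ≠ 0 := by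
    intro h
    apply hx0
    have : sγ 0 * sγ 1 = 0 := by rw [hrel, h]; ring
    rcases mul_eq_zero.mp this with h | h
    · exact h
    · exact absurd h hy0
  by_cases hxz : sγ 0 ∣ sγ 2
  · obtain ⟨v, hv⟩ := hxz
    refine Or.inl (conclA (chartA_factor sγ v (hconst 0) ?_ ?_))
    · -- x^2 v^3 = y
      apply mul_left_cancel₀ hx0
      calc sγ 0 * (sγ 0 ^ 2 * v ^ 3) = (sγ 0 * v) ^ 3 := by ring
        _ = sγ 2 ^ 3 := by rw [← hv]
        _ = sγ 0 * sγ 1 := hrel.symm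
    · exact hv.symm
  by_cases hyz : sγ 1 ∣ sγ 2
  · obtain ⟨v, hv⟩ := hyz
    refine Or.inr (conclC (chartC_factor sγ v (hconst 1) ?_ ?_))
    · apply mul_left_cancel₀ hy0
      calc sγ 1 * (sγ 1 ^ 2 * v ^ 3) = (sγ 1 * v) ^ 3 := by ring
        _ = sγ 2 ^ 3 := by rw [← hv]
        _ = sγ 1 * sγ 0 := by rw [← hrel]; ring
    · exact hv.symm
  -- middle chart
  have hzx : sγ 2 ∣ sγ 0 := (ValuationRing.dvd_total _ _).resolve_left hxz
  have hzy : sγ 2 ∣ sγ 1 := (ValuationRing.dvd_total _ _).resolve_left hyz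
  obtain ⟨u, hu⟩ := hzx
  obtain ⟨w, hww⟩ := hzy
  have huw : u * w = sγ 2 := by
    apply mul_left_cancel₀ (pow_ne_zero 2 hz0)
    calc sγ 2 ^ 2 * (u * w) = (sγ 2 * u) * (sγ 2 * w) := by ring
      _ = sγ 0 * sγ 1 := by rw [← hu, ← hww]
      _ = sγ 2 ^ 3 := hrel
      _ = sγ 2 ^ 2 * sγ 2 := by ring
  have hw0 : PowerSeries.constantCoeff w = 0 := by
    by_contra hne
    apply hyz
    have hwu : IsUnit w := PowerSeries.isUnit_iff_constantCoeff.mpr (IsUnit.mk0 _ hne)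
    obtain ⟨w', hw'⟩ := hwu.exists_right_inv
    refine ⟨w', ?_⟩
    calc sγ 2 = sγ 2 * (w * w') := by rw [hw', mul_one]
      _ = (sγ 2 * w) * w' := by ring
      _ = sγ 1 * w' := by rw [← hww]
  refine Or.inl (conclB (chartB_factor sγ u w hw0 ?_ ?_ ?_))
  · calc u ^ 2 * w = (u * w) * u := by ring
      _ = sγ 2 * u := by rw [huw]
      _ = sγ 0 := hu.symm
  · calc u * w ^ 2 = (u * w) * w := by ring
      _ = sγ 2 * w := by rw [huw]
      _ = sγ 1 := hww.symm
  · exact huw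


lemma minimalPrimes_Jid : (Jid k).minimalPrimes = {PA k, PC k} := by
  have hJA : Jid k ≤ PA k := Jid_le_ker isArcTriple_chartA
  have hJC : Jid k ≤ PC k := Jid_le_ker isArcTriple_chartC
  have hAC : ¬ PA k ≤ PC k := fun h => X11_not_mem_PC (h X11_mem_PA)
  have hCA : ¬ PC k ≤ PA k := fun h => X01_not_mem_PA (h X01_mem_PC)
  ext Q
  constructor
  · rintro ⟨⟨hQp, hQJ⟩, hmin⟩
    rcases main_cases hQp hQJ with h | h
    · exact Or.inl (le_antisymm (hmin ⟨inferInstance, hJA⟩ h) h)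
    · exact Or.inr (le_antisymm (hmin ⟨inferInstance, hJC⟩ h) h)
  · rintro (rfl | rfl)
    · refine ⟨⟨inferInstance, hJA⟩, ?_⟩
      rintro q ⟨hq, hqJ⟩ hle
      rcases main_cases hq hqJ with h | h
      · exact h
      · exact absurd (h.trans hle) hCA
    · refine ⟨⟨inferInstance, hJC⟩, ?_⟩
      rintro q ⟨hq, hqJ⟩ hle
      rcases main_cases hq hqJ with h | h
      · exact absurd (h.trans hle) hAC
      · exact h

end A2Aux


set_option maxHeartbeats 2000000 in
set_option synthInstance.maxHeartbeats 1000000 in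
/-- **Arc fiber of the A₂ singularity.**  Let `k` be algebraically closed of characteristic
zero and `f = x·y − z³ ∈ k[x,y,z]`.  The set of arcs on `V(f)` through the origin — the prime
spectrum of the quotient of the arc algebra `A∞((f))` by the ideal generated by the images of
`x⁽⁰⁾, y⁽⁰⁾, z⁽⁰⁾` — has exactly two irreducible components. -/
theorem arc_fiber_A2_two_components (k : Type*) [Field k] [IsAlgClosed k] [CharZero k] :
    ∃ C₁ C₂ : Set (PrimeSpectrum
      (ArcAlgebra (Ideal.span {(MvPolynomial.X 0 * MvPolynomial.X 1 -
          MvPolynomial.X 2 ^ 3 : MvPolynomial (Fin 3) k)}) ⧸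
        Ideal.span {a : ArcAlgebra (Ideal.span {(MvPolynomial.X 0 * MvPolynomial.X 1 -
            MvPolynomial.X 2 ^ 3 : MvPolynomial (Fin 3) k)}) |
          ∃ j : Fin 3, a = Ideal.Quotient.mk _ (MvPolynomial.X (j, (0 : ℕ)))})),
      C₁ ≠ C₂ ∧
      irreducibleComponents (PrimeSpectrum
        (ArcAlgebra (Ideal.span {(MvPolynomial.X 0 * MvPolynomial.X 1 -
            MvPolynomial.X 2 ^ 3 : MvPolynomial (Fin 3) k)}) ⧸
          Ideal.span {a : ArcAlgebra (Ideal.span {(MvPolynomial.X 0 * MvPolynomial.X 1 -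
              MvPolynomial.X 2 ^ 3 : MvPolynomial (Fin 3) k)}) |
            ∃ j : Fin 3, a = Ideal.Quotient.mk _ (MvPolynomial.X (j, (0 : ℕ)))})) =
        {C₁, C₂} := by
  classical
  set I₀ : Ideal (MvPolynomial (Fin 3) k) := Ideal.span {(MvPolynomial.X 0 * MvPolynomial.X 1 -
      MvPolynomial.X 2 ^ 3 : MvPolynomial (Fin 3) k)} with hI₀
  set I₂ : Ideal (ArcAlgebra I₀) := Ideal.span {a : ArcAlgebra I₀ |
      ∃ j : Fin 3, a = Ideal.Quotient.mk _ (MvPolynomial.X (j, (0 : ℕ)))} with hI₂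
  set B := ArcAlgebra I₀ ⧸ I₂ with hB
  set π : R3 k →+* B :=
    (Ideal.Quotient.mk I₂).comp (Ideal.Quotient.mk (arcIdeal I₀)) with hπ
  have hsurj : Function.Surjective π := by
    rw [hπ, RingHom.coe_comp]
    exact Ideal.Quotient.mk_surjective.comp Ideal.Quotient.mk_surjective
  have hI₀f : I₀ = Ideal.span {f0 k} := rfl
  have hkerπ : RingHom.ker π = Jid k := by
    have hset : {a : ArcAlgebra I₀ |
        ∃ j : Fin 3, a = Ideal.Quotient.mk (arcIdeal I₀) (MvPolynomial.X (j, (0 : ℕ)))} =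
        (Ideal.Quotient.mk (arcIdeal I₀)) ''
          {g : R3 k | ∃ j : Fin 3, g = MvPolynomial.X (j, 0)} := by
      ext a
      constructor
      · rintro ⟨j, rfl⟩
        exact ⟨MvPolynomial.X (j, 0), ⟨j, rfl⟩, rfl⟩
      · rintro ⟨g, ⟨j, rfl⟩, rfl⟩
        exact ⟨j, rfl⟩
    have h2 : I₂ = Ideal.map (Ideal.Quotient.mk (arcIdeal I₀))
        (Ideal.span {g : R3 k | ∃ j : Fin 3, g = MvPolynomial.X (j, 0)}) := by
      rw [hI₂, hset, Ideal.map_span]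
    have h1 : RingHom.ker π = Ideal.comap (Ideal.Quotient.mk (arcIdeal I₀)) I₂ := by
      ext p
      simp only [hπ, RingHom.mem_ker, Ideal.mem_comap, RingHom.comp_apply]
      exact Ideal.Quotient.eq_zero_iff_mem
    rw [h1, h2, Ideal.comap_map_of_surjective _ Ideal.Quotient.mk_surjective,
      ← RingHom.ker_eq_comap_bot, Ideal.mk_ker, Jid, hI₀f, sup_comm]
  have hJA : Jid k ≤ PA k := Jid_le_ker isArcTriple_chartA
  have hJC : Jid k ≤ PC k := Jid_le_ker isArcTriple_chartC
  -- minimal primes of B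
  have hcomap : (RingHom.ker π).minimalPrimes =
      Ideal.comap π '' (minimalPrimes B) := by
    rw [RingHom.ker_eq_comap_bot]
    exact Ideal.comap_minimalPrimes_eq_of_surjective (S := B) (f := π) hsurj ⊥
  have himg : Ideal.comap π '' (minimalPrimes B) = {PA k, PC k} := by
    rw [← hcomap, hkerπ, minimalPrimes_Jid]
  have hmapcomap : ∀ q : Ideal B, Ideal.map π (Ideal.comap π q) = q :=
    fun q => Ideal.map_comap_of_surjective π hsurj q
  have hBmin : minimalPrimes B = {Ideal.map π (PA k), Ideal.map π (PC k)} := by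
    have h := congrArg (Set.image (Ideal.map π)) himg
    rw [← Set.image_comp] at h
    have hid : (Ideal.map π ∘ Ideal.comap π) '' (minimalPrimes B) = minimalPrimes B := by
      ext q
      simp only [Set.mem_image, Function.comp_apply]
      constructor
      · rintro ⟨q', hq', rfl⟩
        rwa [hmapcomap]
      · intro hq
        exact ⟨q, hq, hmapcomap q⟩
    rw [hid] at h
    rw [h, Set.image_insert_eq, Set.image_singleton]
  -- irreducible components
  have hcomp := (PrimeSpectrum.zeroLocus_minimalPrimes B).symm
  rw [hBmin, Set.image_insert_eq, Set.image_singleton] at hcomp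
  refine ⟨PrimeSpectrum.zeroLocus ((Ideal.map π (PA k) : Ideal B) : Set B),
    PrimeSpectrum.zeroLocus ((Ideal.map π (PC k) : Ideal B) : Set B),
    ?_, hcomp⟩
  -- distinctness
  have hkA : RingHom.ker π ≤ PA k := hkerπ.le.trans hJA
  have hkC : RingHom.ker π ≤ PC k := hkerπ.le.trans hJC
  haveI hpA : (Ideal.map π (PA k)).IsPrime :=
    Ideal.map_isPrime_of_surjective hsurj hkA
  haveI hpC : (Ideal.map π (PC k)).IsPrime :=
    Ideal.map_isPrime_of_surjective hsurj hkC
  intro heq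
  have hvan := congrArg (PrimeSpectrum.vanishingIdeal (R := B)) heq
  rw [PrimeSpectrum.vanishingIdeal_zeroLocus_eq_radical,
    PrimeSpectrum.vanishingIdeal_zeroLocus_eq_radical,
    hpA.radical, hpC.radical] at hvan
  have hPAC : PA k = PC k := by
    have := congrArg (Ideal.comap π) hvan
    rwa [Ideal.comap_map_of_surjective _ hsurj, Ideal.comap_map_of_surjective _ hsurj,
      ← RingHom.ker_eq_comap_bot, sup_eq_left.mpr hkA, sup_eq_left.mpr hkC] at this
  exact X11_not_mem_PC (hPAC ▸ X11_mem_PA)
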